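/- Let (T₁, (g¹_{m,j})) and (T₂, (g²_{m,j})) be two primitive expressions whose associated series coincide: Σ₁(b,p) = Σ₂(b,p) for all (b,p) ∈ ℤ^ℓ × ℕ. Then: (i) min(π(T₁)) = min(π(T₂)), and for every m in this common set and every j ∈ ℕ one has (m,j) ∈ T₁ ⟺ (m,j) ∈ T₂, and when both hold g¹_{m,j}(0,0) = g²_{m,j}(0,0); (ii) min(T₁) = min(T₂), and for every (m,j) in this common set g¹_{m,j}(0,0) = g²_{m,j}(0,0). -/

import Mathlib

/-- The Laurent-type series (encoded by its coefficient function on `ℤ^ℓ × ℕ`, the value at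
`(b, p)` being the coefficient of `x^b (τ x^{-k})^p`) associated to the formal sum
`∑_{(m,j) ∈ T} g_{m,j}(x,τ) · x^m · (τ x^{-k})^j`. -/
def assocSeries {ℓ : ℕ} {A : Type*} [CommRing A] (k : Fin ℓ → ℕ)
    (T : Finset ((Fin ℓ → ℤ) × ℕ))
    (g : (Fin ℓ → ℤ) × ℕ → ((Fin ℓ → ℕ) × ℕ) → A) :
    ((Fin ℓ → ℤ) × ℕ) → A := fun bp =>
  ∑ mj ∈ T,
    if mj.2 ≤ bp.2 ∧ ∀ i, mj.1 i + ((bp.2 - mj.2 : ℕ) : ℤ) * (k i : ℤ) ≤ bp.1 i then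
      g mj (fun i => (bp.1 i - mj.1 i - ((bp.2 - mj.2 : ℕ) : ℤ) * (k i : ℤ)).toNat,
             bp.2 - mj.2)
    else 0

/-- The set of minimal elements of the projection `π(T) ⊆ ℤ^ℓ` of `T ⊆ ℤ^ℓ × ℕ`,
with respect to the componentwise partial order on `ℤ^ℓ`. -/
def minPi {ℓ : ℕ} (T : Finset ((Fin ℓ → ℤ) × ℕ)) : Set (Fin ℓ → ℤ) :=
  {m | (∃ j, (m, j) ∈ T) ∧ ∀ m' : Fin ℓ → ℤ, ∀ j' : ℕ, (m', j') ∈ T → m' ≤ m → m' = m}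

/-- The set of minimal elements of `T ⊆ ℤ^ℓ × ℕ` with respect to the product of the
componentwise partial order on `ℤ^ℓ` and the usual order on `ℕ`. -/
def minElts {ℓ : ℕ} (T : Finset ((Fin ℓ → ℤ) × ℕ)) : Set ((Fin ℓ → ℤ) × ℕ) :=
  {mj | mj ∈ T ∧ ∀ mj' ∈ T, mj' ≤ mj → mj' = mj}

section helpers
variable {ℓ : ℕ} {A : Type*} [CommRing A] {k : Fin ℓ → ℕ}
  {T : Finset ((Fin ℓ → ℤ) × ℕ)} {g : (Fin ℓ → ℤ) × ℕ → ((Fin ℓ → ℕ) × ℕ) → A}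

lemma exists_le_of_ne_zero {bp : (Fin ℓ → ℤ) × ℕ}
    (h : assocSeries k T g bp ≠ 0) : ∃ mj ∈ T, mj ≤ bp := by
  rw [assocSeries] at h
  obtain ⟨mj, hmjT, hne⟩ := Finset.exists_ne_zero_of_sum_ne_zero h
  by_cases hc : mj.2 ≤ bp.2 ∧ ∀ i, mj.1 i + ((bp.2 - mj.2 : ℕ) : ℤ) * (k i : ℤ) ≤ bp.1 i
  · refine ⟨mj, hmjT, ?_, hc.1⟩
    intro i
    have h2 := hc.2 i
    have h3 : (0:ℤ) ≤ ((bp.2 - mj.2 : ℕ) : ℤ) * (k i : ℤ) := by positivity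
    linarith
  · simp [hc] at hne

lemma diag_term (bp : (Fin ℓ → ℤ) × ℕ) :
    (if bp.2 ≤ bp.2 ∧ ∀ i, bp.1 i + ((bp.2 - bp.2 : ℕ) : ℤ) * (k i : ℤ) ≤ bp.1 i then
      g bp (fun i => (bp.1 i - bp.1 i - ((bp.2 - bp.2 : ℕ) : ℤ) * (k i : ℤ)).toNat,
             bp.2 - bp.2)
    else 0) = g bp (0, 0) := by
  rw [if_pos]
  · congr 1
    refine Prod.ext ?_ (Nat.sub_self _)
    funext i
    simp [Nat.sub_self]
  · refine ⟨le_refl _, fun i => ?_⟩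
    simp [Nat.sub_self]

/-- value of the series at a point whose first coordinate is minimal in π(T) -/
lemma eval_minPi (hmin : ∀ m' j', (m', j') ∈ T → m' ≤ (m : Fin ℓ → ℤ) → m' = m)
    {i₀ : Fin ℓ} (hk : 0 < k i₀) (j : ℕ) :
    assocSeries k T g (m, j) = if (m, j) ∈ T then g (m, j) (0, 0) else 0 := by
  rw [assocSeries]
  rw [show (∑ mj ∈ T,
      if mj.2 ≤ (m, j).2 ∧ ∀ i, mj.1 i + (((m, j).2 - mj.2 : ℕ) : ℤ) * (k i : ℤ) ≤ (m, j).1 i then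
        g mj (fun i => ((m, j).1 i - mj.1 i - (((m, j).2 - mj.2 : ℕ) : ℤ) * (k i : ℤ)).toNat,
               (m, j).2 - mj.2)
      else 0) =
      ∑ mj ∈ T, if mj = (m, j) then g (m, j) (0, 0) else 0 from ?_, Finset.sum_ite_eq' T (m, j) _]
  refine Finset.sum_congr rfl fun mj hmj => ?_
  by_cases he : mj = (m, j)
  · subst he
    rw [if_pos rfl]
    exact diag_term (m, j)
  · rw [if_neg he]
    by_cases hc : mj.2 ≤ (m, j).2 ∧
        ∀ i, mj.1 i + (((m, j).2 - mj.2 : ℕ) : ℤ) * (k i : ℤ) ≤ (m, j).1 i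
    · exfalso
      apply he
      have hle : mj.1 ≤ m := by
        intro i
        have h2 := hc.2 i
        have h3 : (0:ℤ) ≤ ((j - mj.2 : ℕ) : ℤ) * (k i : ℤ) := by positivity
        simp only at h2
        linarith
      have hm1 : mj.1 = m := hmin mj.1 mj.2 (by simpa using hmj) hle
      have h2 := hc.2 i₀
      rw [hm1] at h2
      have h4 : ((j - mj.2 : ℕ) : ℤ) * (k i₀ : ℤ) ≤ 0 := by simpa using h2
      have h5 : (j - mj.2 : ℕ) = 0 := by
        by_contra h5
        have : (0:ℤ) < ((j - mj.2 : ℕ) : ℤ) * (k i₀ : ℤ) := by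
          apply mul_pos <;> [exact_mod_cast Nat.pos_of_ne_zero h5; exact_mod_cast hk]
        linarith
      have hj : mj.2 = j := by
        have := hc.1
        simp only at this
        omega
      exact Prod.ext hm1 hj
    · rw [if_neg hc]

/-- value of the series at a minimal element of T -/
lemma eval_minElts {mj : (Fin ℓ → ℤ) × ℕ} (hmjT : mj ∈ T)
    (hmin : ∀ mj' ∈ T, mj' ≤ mj → mj' = mj) :
    assocSeries k T g mj = g mj (0, 0) := by
  rw [assocSeries]
  rw [Finset.sum_eq_single_of_mem mj hmjT]
  · exact diag_term mj
  · intro mj' hmj' hne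
    rw [if_neg]
    intro hc
    apply hne
    apply hmin mj' hmj'
    refine ⟨?_, hc.1⟩
    intro i
    have h2 := hc.2 i
    have h3 : (0:ℤ) ≤ ((mj.2 - mj'.2 : ℕ) : ℤ) * (k i : ℤ) := by positivity
    linarith

end helpers

section main
variable {ℓ : ℕ} {A : Type*} [CommRing A] {k : Fin ℓ → ℕ}
  {T₁ T₂ : Finset ((Fin ℓ → ℤ) × ℕ)}
  {g₁ g₂ : (Fin ℓ → ℤ) × ℕ → ((Fin ℓ → ℕ) × ℕ) → A}

lemma minElts_subset
    (hprim₁ : ∀ mj ∈ T₁, g₁ mj (0, 0) ≠ 0) (hprim₂ : ∀ mj ∈ T₂, g₂ mj (0, 0) ≠ 0)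
    (heq : ∀ bp, assocSeries k T₁ g₁ bp = assocSeries k T₂ g₂ bp) :
    minElts T₁ ⊆ minElts T₂ := by
  rintro mj ⟨hmjT, hmin⟩
  have h1 : assocSeries k T₂ g₂ mj ≠ 0 := by
    rw [← heq, eval_minElts hmjT hmin]; exact hprim₁ mj hmjT
  obtain ⟨s, hsT, hs⟩ := exists_le_of_ne_zero h1
  obtain ⟨t, hts, htmin⟩ := T₂.finite_toSet.isPWO.exists_le_minimal hsT
  have htT : t ∈ T₂ := htmin.1
  have htminT : ∀ mj' ∈ T₂, mj' ≤ t → mj' = t :=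
    fun mj' h' hle => le_antisymm hle (htmin.2 h' hle)
  have h2 : assocSeries k T₁ g₁ t ≠ 0 := by
    rw [heq, eval_minElts htT htminT]; exact hprim₂ t htT
  obtain ⟨u, huT, hu⟩ := exists_le_of_ne_zero h2
  have hu' : u = mj := hmin u huT (hu.trans (hts.trans hs))
  have ht' : t = mj := le_antisymm (hts.trans hs) (hu' ▸ hu)
  subst ht'
  exact ⟨htT, htminT⟩

lemma minPi_subset {i₀ : Fin ℓ} (hk : 0 < k i₀)
    (hprim₁ : ∀ mj ∈ T₁, g₁ mj (0, 0) ≠ 0) (hprim₂ : ∀ mj ∈ T₂, g₂ mj (0, 0) ≠ 0)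
    (heq : ∀ bp, assocSeries k T₁ g₁ bp = assocSeries k T₂ g₂ bp) :
    minPi T₁ ⊆ minPi T₂ := by
  rintro m ⟨⟨j, hjT⟩, hmin⟩
  have h1 : assocSeries k T₂ g₂ (m, j) ≠ 0 := by
    rw [← heq, eval_minPi hmin hk j, if_pos hjT]; exact hprim₁ _ hjT
  obtain ⟨s, hsT, hs⟩ := exists_le_of_ne_zero h1
  obtain ⟨m'', hm''le, hm''min⟩ :=
    (T₂.image Prod.fst).finite_toSet.isPWO.exists_le_minimal (Finset.mem_image_of_mem _ hsT)
  obtain ⟨t, htT, ht1⟩ := Finset.mem_image.mp hm''min.1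
  have hm''minT : ∀ m' j', (m', j') ∈ T₂ → m' ≤ m'' → m' = m'' := by
    intro m' j' h' hle
    exact le_antisymm hle (hm''min.2 (Finset.mem_image_of_mem _ h') hle)
  have htT' : (m'', t.2) ∈ T₂ := by rw [← ht1, Prod.mk.eta]; exact htT
  have h2 : assocSeries k T₁ g₁ (m'', t.2) ≠ 0 := by
    rw [heq, eval_minPi hm''minT hk t.2, if_pos htT']; exact hprim₂ _ htT'
  obtain ⟨u, huT, hu⟩ := exists_le_of_ne_zero h2
  have huT' : (u.1, u.2) ∈ T₁ := by rw [Prod.mk.eta]; exact huT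
  have hu1 : u.1 = m := hmin u.1 u.2 huT' (le_trans hu.1 (le_trans hm''le hs.1))
  have hm : m'' = m := le_antisymm (le_trans hm''le hs.1) (hu1 ▸ hu.1)
  subst hm
  exact ⟨⟨t.2, htT'⟩, hm''minT⟩

end main

/-- coefficient form of Corollary 14.5.2.50.  If two primitive expressions
`(T₁, g₁)` and `(T₂, g₂)` (i.e. `gᵢ_{m,j}(0,0) ≠ 0` for all `(m,j) ∈ Tᵢ`) have the same
associated series, then (i) `min(π(T₁)) = min(π(T₂))` and for `m` in this common set the
membership `(m,j) ∈ T₁ ↔ (m,j) ∈ T₂` holds for all `j`, with matching leading coefficients;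
(ii) `min(T₁) = min(T₂)` with matching leading coefficients. -/
theorem primitiveExpression_leading_coeff_well_defined
    {ℓ₁ ℓ : ℕ} (h1 : 1 ≤ ℓ₁) (h2 : ℓ₁ ≤ ℓ)
    (k : Fin ℓ → ℕ)
    (hk1 : ∀ i : Fin ℓ, (i : ℕ) < ℓ₁ → 0 < k i)
    (hk2 : ∀ i : Fin ℓ, ℓ₁ ≤ (i : ℕ) → k i = 0)
    {A : Type*} [CommRing A]
    (T₁ T₂ : Finset ((Fin ℓ → ℤ) × ℕ))
    (g₁ g₂ : (Fin ℓ → ℤ) × ℕ → ((Fin ℓ → ℕ) × ℕ) → A)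
    (hprim₁ : ∀ mj ∈ T₁, g₁ mj (0, 0) ≠ 0)
    (hprim₂ : ∀ mj ∈ T₂, g₂ mj (0, 0) ≠ 0)
    (heq : ∀ bp, assocSeries k T₁ g₁ bp = assocSeries k T₂ g₂ bp) :
    (minPi T₁ = minPi T₂ ∧
      ∀ m ∈ minPi T₁, ∀ j : ℕ,
        ((m, j) ∈ T₁ ↔ (m, j) ∈ T₂) ∧
        ((m, j) ∈ T₁ ∧ (m, j) ∈ T₂ → g₁ (m, j) (0, 0) = g₂ (m, j) (0, 0))) ∧
    (minElts T₁ = minElts T₂ ∧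
      ∀ mj ∈ minElts T₁, g₁ mj (0, 0) = g₂ mj (0, 0)) := by
  have heq' : ∀ bp, assocSeries k T₂ g₂ bp = assocSeries k T₁ g₁ bp := fun bp => (heq bp).symm
  have hℓ : 0 < ℓ := lt_of_lt_of_le h1 h2
  set i₀ : Fin ℓ := ⟨0, hℓ⟩ with hi₀
  have hk : 0 < k i₀ := hk1 i₀ (by rw [hi₀]; exact h1)
  have hpi : minPi T₁ = minPi T₂ :=
    Set.Subset.antisymm (minPi_subset hk hprim₁ hprim₂ heq) (minPi_subset hk hprim₂ hprim₁ heq')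
  have helts : minElts T₁ = minElts T₂ :=
    Set.Subset.antisymm (minElts_subset hprim₁ hprim₂ heq) (minElts_subset hprim₂ hprim₁ heq')
  refine ⟨⟨hpi, fun m hm j => ?_⟩, helts, fun mj hmj => ?_⟩
  · have hm2 : m ∈ minPi T₂ := hpi ▸ hm
    have key : (if (m, j) ∈ T₁ then g₁ (m, j) (0, 0) else 0)
        = (if (m, j) ∈ T₂ then g₂ (m, j) (0, 0) else 0) := by
      rw [← eval_minPi hm.2 hk j, ← eval_minPi hm2.2 hk j]
      exact heq _
    constructor
    · constructor
      · intro h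
        by_contra h'
        rw [if_pos h, if_neg h'] at key
        exact hprim₁ _ h key
      · intro h
        by_contra h'
        rw [if_pos h, if_neg h'] at key
        exact hprim₂ _ h key.symm
    · rintro ⟨ha, hb⟩
      rw [if_pos ha, if_pos hb] at key
      exact key
  · have hmj2 : mj ∈ minElts T₂ := helts ▸ hmj
    rw [← eval_minElts (k := k) (g := g₁) hmj.1 hmj.2, ← eval_minElts (k := k) (g := g₂) hmj2.1 hmj2.2]
    exact heq _
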